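/- For a jointly convex loss l, a single application of Jensen's inequality yields r_k(f,D) ≤ r_{k-1}(f,D), where r_k is the expected batched risk of size k: specifically, E[l((1/k)∑_{i=1}^k u_i, (1/k)∑_{i=1}^k v_i)] ≤ E[l((1/(k-1))∑_{i=1}^{k-1} u_i, (1/(k-1))∑_{i=1}^{k-1} v_i)] for i.i.d. real-valued pairs (u_i, v_i). -/

import Mathlib

open MeasureTheory

/-- one Jensen step: for i.i.d. integrable pairs and a jointly convex
loss `l`, the expected batched risk of size `k` is at most that of size `k-1`. -/
theorem krisk_le_krisk_pred_of_convex
    (D : Measure (ℝ × ℝ)) [IsProbabilityMeasure D]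
    (l : ℝ × ℝ → ℝ) (hl : ConvexOn ℝ Set.univ l)
    (k : ℕ) (hk : 2 ≤ k)
    (hint : ∀ m : ℕ, 0 < m →
      Integrable
        (fun w : Fin m → ℝ × ℝ =>
          l ((∑ i, (w i).1) / m, (∑ i, (w i).2) / m))
        (Measure.pi fun _ : Fin m => D)) :
    (∫ w : Fin k → ℝ × ℝ,
        l ((∑ i, (w i).1) / k, (∑ i, (w i).2) / k)
        ∂(Measure.pi fun _ : Fin k => D)) ≤
    (∫ w : Fin (k - 1) → ℝ × ℝ,
        l ((∑ i, (w i).1) / (k - 1 : ℕ), (∑ i, (w i).2) / (k - 1 : ℕ))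
        ∂(Measure.pi fun _ : Fin (k - 1) => D)) := by
  obtain ⟨n, rfl⟩ : ∃ n, k = n + 1 := ⟨k - 1, by omega⟩
  have hn : 0 < n := by omega
  have hn' : (0 : ℝ) < n := by exact_mod_cast hn
  simp only [Nat.add_sub_cancel]
  set μ : Measure (Fin (n + 1) → ℝ × ℝ) := Measure.pi fun _ => D with hμ
  set ν : Measure (Fin n → ℝ × ℝ) := Measure.pi fun _ => D with hν
  set g : (Fin n → ℝ × ℝ) → ℝ :=
    fun w => l ((∑ i, (w i).1) / n, (∑ i, (w i).2) / n) with hg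
  have hgint : Integrable g ν := hint n hn
  -- For each j, the integral of the leave-one-out risk equals the (n)-batch risk.
  have hsnd : Integrable (fun p : (ℝ × ℝ) × (Fin n → ℝ × ℝ) => g p.2) (D.prod ν) := by
    have hmap : (D.prod ν).map Prod.snd = ν := by
      simp [Measure.map_snd_prod, measure_univ]
    have hm : AEStronglyMeasurable g ((D.prod ν).map Prod.snd) := by
      rw [hmap]; exact hgint.aestronglyMeasurable
    exact (integrable_map_measure hm measurable_snd.aemeasurable).mp
      (by rwa [hmap])
  have hmp : ∀ j : Fin (n + 1),
      MeasurePreserving (MeasurableEquiv.piFinSuccAbove (fun _ : Fin (n+1) => ℝ × ℝ) j)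
        μ (D.prod ν) :=
    fun j => measurePreserving_piFinSuccAbove (fun _ => D) j
  have hGint : ∀ j : Fin (n + 1),
      Integrable (fun w : Fin (n + 1) → ℝ × ℝ => g (fun t => w (j.succAbove t))) μ := by
    intro j
    have := ((hmp j).integrable_comp_emb
      (MeasurableEquiv.piFinSuccAbove (fun _ : Fin (n+1) => ℝ × ℝ) j).measurableEmbedding).mpr hsnd
    exact this
  have hGval : ∀ j : Fin (n + 1),
      ∫ w, g (fun t => w (j.succAbove t)) ∂μ = ∫ w, g w ∂ν := by
    intro j
    have h1 : ∫ w, g (fun t => w (j.succAbove t)) ∂μ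
        = ∫ p : (ℝ × ℝ) × (Fin n → ℝ × ℝ), g p.2 ∂(D.prod ν) :=
      (hmp j).integral_comp
        (MeasurableEquiv.piFinSuccAbove (fun _ : Fin (n+1) => ℝ × ℝ) j).measurableEmbedding
        (fun p => g p.2)
    rw [h1, integral_fun_snd]
    simp
  -- pointwise Jensen step
  have key : ∀ w : Fin (n + 1) → ℝ × ℝ,
      l ((∑ i, (w i).1) / (n + 1 : ℕ), (∑ i, (w i).2) / (n + 1 : ℕ))
        ≤ ∑ j : Fin (n + 1), (1 / (n + 1 : ℝ)) * g (fun t => w (j.succAbove t)) := by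
    intro w
    have h₀ : ∀ j ∈ Finset.univ (α := Fin (n + 1)), (0 : ℝ) ≤ 1 / (n + 1 : ℝ) :=
      fun _ _ => by positivity
    have h₁ : ∑ _j : Fin (n + 1), (1 / (n + 1 : ℝ)) = 1 := by
      rw [Finset.sum_const]
      simp only [Finset.card_univ, Fintype.card_fin, nsmul_eq_mul]
      field_simp
      push_cast
      ring
    have hmem : ∀ j ∈ Finset.univ (α := Fin (n + 1)),
        (((∑ t, (w (j.succAbove t)).1) / (n : ℝ), (∑ t, (w (j.succAbove t)).2) / (n : ℝ)) :
          ℝ × ℝ) ∈ (Set.univ : Set (ℝ × ℝ)) := fun _ _ => trivial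
    have hsum : ∀ j : Fin (n + 1), ∀ c : (ℝ × ℝ) → ℝ,
        ∑ t : Fin n, c (w (j.succAbove t)) = (∑ i, c (w i)) - c (w j) := by
      intro j c
      have := Fin.sum_univ_succAbove (fun i => c (w i)) j
      linarith [this]
    have hcenter :
        (∑ j : Fin (n + 1), (1 / (n + 1 : ℝ)) •
          (((∑ t, (w (j.succAbove t)).1) / (n : ℝ), (∑ t, (w (j.succAbove t)).2) / (n : ℝ)) :
            ℝ × ℝ))
        = (((∑ i, (w i).1) / (n + 1 : ℕ), (∑ i, (w i).2) / (n + 1 : ℕ)) : ℝ × ℝ) := by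
      apply Prod.ext
      · simp only [Prod.fst_sum, Prod.smul_fst, smul_eq_mul]
        push_cast
        have : ∀ j : Fin (n + 1),
            (1 / ((n : ℝ) + 1)) * ((∑ t, (w (j.succAbove t)).1) / (n : ℝ))
            = (1 / ((n : ℝ) + 1)) * (((∑ i, (w i).1) - (w j).1) / (n : ℝ)) := by
          intro j; rw [hsum j (fun p => p.1)]
        rw [Finset.sum_congr rfl (fun j _ => this j), ← Finset.mul_sum,
          ← Finset.sum_div, Finset.sum_sub_distrib, Finset.sum_const]
        simp only [Finset.card_univ, Fintype.card_fin, nsmul_eq_mul]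
        field_simp
        push_cast
        ring
      · simp only [Prod.snd_sum, Prod.smul_snd, smul_eq_mul]
        push_cast
        have : ∀ j : Fin (n + 1),
            (1 / ((n : ℝ) + 1)) * ((∑ t, (w (j.succAbove t)).2) / (n : ℝ))
            = (1 / ((n : ℝ) + 1)) * (((∑ i, (w i).2) - (w j).2) / (n : ℝ)) := by
          intro j; rw [hsum j (fun p => p.2)]
        rw [Finset.sum_congr rfl (fun j _ => this j), ← Finset.mul_sum,
          ← Finset.sum_div, Finset.sum_sub_distrib, Finset.sum_const]
        simp only [Finset.card_univ, Fintype.card_fin, nsmul_eq_mul]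
        field_simp
        push_cast
        ring
    have := hl.map_sum_le h₀ h₁ hmem
    rw [hcenter] at this
    exact this
  -- integrate the pointwise inequality
  have hSint : Integrable
      (fun w : Fin (n + 1) → ℝ × ℝ =>
        ∑ j : Fin (n + 1), (1 / (n + 1 : ℝ)) * g (fun t => w (j.succAbove t))) μ :=
    integrable_finset_sum _ (fun j _ => (hGint j).const_mul _)
  calc (∫ w : Fin (n+1) → ℝ × ℝ,
        l ((∑ i, (w i).1) / (n+1 : ℕ), (∑ i, (w i).2) / (n+1 : ℕ)) ∂μ)
      ≤ ∫ w, ∑ j : Fin (n + 1), (1 / (n + 1 : ℝ)) * g (fun t => w (j.succAbove t)) ∂μ :=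
        integral_mono (hint (n + 1) (by omega)) hSint key
    _ = ∑ j : Fin (n + 1), ∫ w, (1 / (n + 1 : ℝ)) * g (fun t => w (j.succAbove t)) ∂μ :=
        integral_finset_sum _ (fun j _ => (hGint j).const_mul _)
    _ = ∑ j : Fin (n + 1), (1 / (n + 1 : ℝ)) * ∫ w, g w ∂ν := by
        refine Finset.sum_congr rfl fun j _ => ?_
        rw [integral_const_mul, hGval j]
    _ = ∫ w, g w ∂ν := by
        rw [Finset.sum_const]
        simp only [Finset.card_univ, Fintype.card_fin, nsmul_eq_mul]
        field_simp
        push_cast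
        ring
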